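/- Let A ∈ ℝ^{m×n} have rank n, R_s invertible, A_p = A R_s⁻¹, E_A a perturbation, A_1 = (A+E_A)(R_s+E_s)⁻¹ with ‖E_s‖·‖R_s⁻¹‖ < 1. If x̂ satisfies A_1ᵀ A_1 ŷ = A_1ᵀ b and (R_s+E_s) x̂ = ŷ, and r = A x̂ − b, then A_pᵀ (I + E_A A†)ᵀ r = − A_pᵀ (I + E_A A†)ᵀ E_A x̂. -/
import Mathlib


open Matrix

/-- Spectral (operator 2-) norm of a real matrix. -/
noncomputable def spNorm {m n : ℕ} (M : Matrix (Fin m) (Fin n) ℝ) : ℝ :=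
  ‖LinearMap.toContinuousLinearMap (Matrix.toEuclideanLin M)‖

/-- Euclidean 2-norm of a real vector. -/
noncomputable def vNorm {n : ℕ} (x : Fin n → ℝ) : ℝ :=
  ‖(WithLp.equiv 2 (Fin n → ℝ)).symm x‖

/-- Moore–Penrose left inverse of a full column rank matrix. -/
noncomputable def pinv {m n : ℕ} (A : Matrix (Fin m) (Fin n) ℝ) : Matrix (Fin n) (Fin m) ℝ :=
  (Aᵀ * A)⁻¹ * Aᵀ

/-- Condition number with respect to left inversion. -/
noncomputable def kappa {m n : ℕ} (A : Matrix (Fin m) (Fin n) ℝ) : ℝ :=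
  spNorm A * spNorm (pinv A)

open scoped Matrix.Norms.L2Operator in
lemma spNorm_eq_l2norm {m n : ℕ} (M : Matrix (Fin m) (Fin n) ℝ) : spNorm M = ‖M‖ := rfl

lemma isUnit_of_rank_eq {n : ℕ} (M : Matrix (Fin n) (Fin n) ℝ) (h : M.rank = n) : IsUnit M := by
  have hs : Function.Surjective M.mulVecLin :=
    LinearMap.range_eq_top.mp (Submodule.eq_top_of_finrank_eq (by simpa [Matrix.rank] using h))
  exact mulVec_surjective_iff_isUnit.mp hs

open scoped Matrix.Norms.L2Operator in
lemma isUnit_one_add {n : ℕ} (M : Matrix (Fin n) (Fin n) ℝ) (h : ‖M‖ < 1) : IsUnit (1 + M) := by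
  have := (Units.oneSub (-M) (by simpa using h)).isUnit
  simpa [Units.oneSub, sub_neg_eq_add] using this

theorem stmt_17 {m n : ℕ} (A EA : Matrix (Fin m) (Fin n) ℝ) (Rs Es : Matrix (Fin n) (Fin n) ℝ)
    (hA : A.rank = n) (hR : IsUnit Rs.det) (hEs : spNorm Es * spNorm Rs⁻¹ < 1)
    (Ap : Matrix (Fin m) (Fin n) ℝ) (hAp : Ap = A * Rs⁻¹)
    (A₁ : Matrix (Fin m) (Fin n) ℝ) (hA₁ : A₁ = (A + EA) * (Rs + Es)⁻¹)
    (b : Fin m → ℝ) (xh yh : Fin n → ℝ)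
    (hy : (A₁ᵀ * A₁) *ᵥ yh = A₁ᵀ *ᵥ b)
    (hx : (Rs + Es) *ᵥ xh = yh)
    (r : Fin m → ℝ) (hr : r = A *ᵥ xh - b) :
    (Apᵀ * (1 + EA * pinv A)ᵀ) *ᵥ r =
      -((Apᵀ * (1 + EA * pinv A)ᵀ) *ᵥ (EA *ᵥ xh)) := by
  -- AᵀA is invertible
  have hAtA : IsUnit (Aᵀ * A).det :=
    (isUnit_iff_isUnit_det _).mp (isUnit_of_rank_eq _ (by rw [rank_transpose_mul_self, hA]))
  -- Rs + Es is invertible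
  have hS : IsUnit (Rs + Es).det := by
    apply (isUnit_iff_isUnit_det _).mp
    open scoped Matrix.Norms.L2Operator in
    have hlt : ‖Rs⁻¹ * Es‖ < 1 := by
      calc ‖Rs⁻¹ * Es‖ ≤ ‖Rs⁻¹‖ * ‖Es‖ := l2_opNorm_mul _ _
        _ = spNorm Es * spNorm Rs⁻¹ := by rw [spNorm_eq_l2norm, spNorm_eq_l2norm, mul_comm]
        _ < 1 := hEs
    have h1 : IsUnit (1 + Rs⁻¹ * Es) := isUnit_one_add _ hlt
    have hfac : Rs + Es = Rs * (1 + Rs⁻¹ * Es) := by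
      rw [mul_add, mul_one, ← mul_assoc, mul_nonsing_inv _ hR, one_mul]
    rw [hfac]
    exact ((isUnit_iff_isUnit_det _).mpr hR).mul h1
  -- pinv A * A = 1
  have hpinv : pinv A * A = 1 := by
    rw [pinv, Matrix.mul_assoc, nonsing_inv_mul _ hAtA]
  -- matrix of interest
  have hM : Apᵀ * (1 + EA * pinv A)ᵀ = ((A + EA) * Rs⁻¹)ᵀ := by
    have hone : (1 + EA * pinv A) * (A * Rs⁻¹) = (A + EA) * Rs⁻¹ := by
      rw [Matrix.add_mul, Matrix.one_mul, ← Matrix.mul_assoc, Matrix.mul_assoc EA, hpinv,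
        Matrix.mul_one, Matrix.add_mul]
    rw [← transpose_mul, hAp, hone]
  -- A₁ * (Rs + Es) = A + EA
  have hA₁S : A₁ * (Rs + Es) = A + EA := by
    rw [hA₁, Matrix.mul_assoc, nonsing_inv_mul _ hS, Matrix.mul_one]
  -- key: (A+EA)ᵀ *ᵥ ((A+EA) *ᵥ xh - b) = 0
  have hkey : (A + EA)ᵀ *ᵥ ((A + EA) *ᵥ xh - b) = 0 := by
    have h0 : A₁ᵀ *ᵥ ((A + EA) *ᵥ xh - b) = 0 := by
      rw [mulVec_sub, ← hA₁S, ← mulVec_mulVec, hx, mulVec_mulVec, hy, sub_self]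
    have hA₁t : A₁ᵀ = ((Rs + Es)⁻¹)ᵀ * (A + EA)ᵀ := by rw [hA₁, transpose_mul]
    have h2 : ((Rs + Es)⁻¹)ᵀ *ᵥ ((A + EA)ᵀ *ᵥ ((A + EA) *ᵥ xh - b)) = 0 := by
      rw [mulVec_mulVec, ← hA₁t]
      exact h0
    set v := (A + EA)ᵀ *ᵥ ((A + EA) *ᵥ xh - b) with hv
    calc v = ((Rs + Es)ᵀ * ((Rs + Es)⁻¹)ᵀ) *ᵥ v := by
          rw [← transpose_mul, nonsing_inv_mul _ hS, transpose_one, one_mulVec]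
      _ = (Rs + Es)ᵀ *ᵥ (((Rs + Es)⁻¹)ᵀ *ᵥ v) := (mulVec_mulVec _ _ _).symm
      _ = 0 := by rw [h2, mulVec_zero]
  -- conclude
  rw [hM, eq_neg_iff_add_eq_zero, ← mulVec_add]
  have hsum : r + EA *ᵥ xh = (A + EA) *ᵥ xh - b := by
    rw [hr, add_mulVec]; abel
  rw [hsum, transpose_mul, ← mulVec_mulVec, hkey, mulVec_zero]
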